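/- arXiv:2404.13461 — 10 statements merged into one kernel-verified Lean document; each statement's English description precedes it below -/
import Mathlib

section
/- Let β_H, β_C, ω > 0 and λ_H, λ_C ∈ [0,1], and let p* := N/D with N := 1 − λ_H(1−λ_C) − λ_C(1−λ_H)e^{−β_Cω} and D := 2 − λ_C(1−λ_H) − λ_H − λ_C(1−λ_H)e^{−β_Cω} − λ_H(1−λ_C)e^{−β_Hω} + λ_H·λ_C·e^{−(β_H+β_C)ω}. Assume λ_H·(p*·e^{−β_Hω} + p* − 1) ≠ 0 and λ_H·(e^{−β_Hω} − (1−λ_C) − λ_C e^{−(β_H+β_C)ω}) ≠ 0. Define the efficiency η*(p) := 1 − (2p − 1 − λ_H(p e^{−β_Hω} + p − 1)) / (λ_H(p e^{−β_Hω} + p − 1)). Then η*(p*) = 1 − λ_C·(1 − λ_H e^{−β_Hω} − (1−λ_H)e^{−β_Cω}) / (λ_H·(e^{−β_Hω} − (1−λ_C) − λ_C e^{−(β_H+β_C)ω})). -/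
/-- Closed form for the maximum efficiency of the three-stroke engine:
the efficiency function `η*` evaluated at the cyclic state `p* = N / D`. -/
theorem three_stroke_max_efficiency
    (βH βC ω lamH lamC : ℝ) (hβH : 0 < βH) (hβC : 0 < βC) (hω : 0 < ω)
    (hlamH : lamH ∈ Set.Icc (0:ℝ) 1) (hlamC : lamC ∈ Set.Icc (0:ℝ) 1) :
    let N : ℝ := 1 - lamH * (1 - lamC) - lamC * (1 - lamH) * Real.exp (-βC * ω)
    let D : ℝ := 2 - lamC * (1 - lamH) - lamH - lamC * (1 - lamH) * Real.exp (-βC * ω)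
      - lamH * (1 - lamC) * Real.exp (-βH * ω) + lamH * lamC * Real.exp (-(βH + βC) * ω)
    let pstar : ℝ := N / D
    let ηstar : ℝ → ℝ := fun p =>
      1 - (2 * p - 1 - lamH * (p * Real.exp (-βH * ω) + p - 1)) /
        (lamH * (p * Real.exp (-βH * ω) + p - 1))
    lamH * (pstar * Real.exp (-βH * ω) + pstar - 1) ≠ 0 →
    lamH * (Real.exp (-βH * ω) - (1 - lamC) - lamC * Real.exp (-(βH + βC) * ω)) ≠ 0 →
    ηstar pstar =
      1 - lamC * (1 - lamH * Real.exp (-βH * ω) - (1 - lamH) * Real.exp (-βC * ω)) /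
        (lamH * (Real.exp (-βH * ω) - (1 - lamC) - lamC * Real.exp (-(βH + βC) * ω))) := by
  intro N D pstar ηstar h1 h2
  obtain ⟨hH0, hH1⟩ := hlamH
  obtain ⟨hC0, hC1⟩ := hlamC
  have heHpos : 0 < Real.exp (-βH * ω) := Real.exp_pos _
  have heCpos : 0 < Real.exp (-βC * ω) := Real.exp_pos _
  have heH1 : Real.exp (-βH * ω) < 1 := by
    apply Real.exp_lt_one_iff.mpr; nlinarith
  have heC1 : Real.exp (-βC * ω) < 1 := by
    apply Real.exp_lt_one_iff.mpr; nlinarith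
  have hprod : Real.exp (-(βH + βC) * ω) = Real.exp (-βH * ω) * Real.exp (-βC * ω) := by
    rw [← Real.exp_add]; ring_nf
  set eH := Real.exp (-βH * ω) with heH
  set eC := Real.exp (-βC * ω) with heC
  have hD : 0 < D := by
    have key : D = 1 + (1 - lamC * (1 + eC)) * ((1 - lamH) - lamH * eH) := by
      show (2 - lamC * (1 - lamH) - lamH - lamC * (1 - lamH) * eC
        - lamH * (1 - lamC) * eH + lamH * lamC * Real.exp (-(βH + βC) * ω)) = _
      rw [hprod]; ring
    rw [key]
    have ha1 : (1:ℝ) - lamC * (1 + eC) ≤ 1 := by nlinarith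
    have ha2 : (-1:ℝ) < 1 - lamC * (1 + eC) := by nlinarith
    have hb1 : (1 - lamH) - lamH * eH ≤ 1 := by nlinarith
    have hb2 : (-1:ℝ) < (1 - lamH) - lamH * eH := by nlinarith
    nlinarith [mul_pos (by linarith : (0:ℝ) < 1 + (1 - lamC * (1 + eC)))
        (by linarith : (0:ℝ) < 1 + ((1 - lamH) - lamH * eH)),
      mul_nonneg (by linarith : (0:ℝ) ≤ 1 - (1 - lamC * (1 + eC)))
        (by linarith : (0:ℝ) ≤ 1 - ((1 - lamH) - lamH * eH))]
  have hD' : D ≠ 0 := ne_of_gt hD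
  show 1 - (2 * pstar - 1 - lamH * (pstar * eH + pstar - 1)) /
        (lamH * (pstar * eH + pstar - 1)) = _
  rw [hprod] at h2 ⊢
  rw [sub_right_inj, div_eq_div_iff h1 h2]
  have hps : pstar = N / D := rfl
  rw [hps]
  have hN : N = 1 - lamH * (1 - lamC) - lamC * (1 - lamH) * eC := rfl
  have hDval : D = 2 - lamC * (1 - lamH) - lamH - lamC * (1 - lamH) * eC
      - lamH * (1 - lamC) * eH + lamH * lamC * (eH * eC) := by
    show (2 - lamC * (1 - lamH) - lamH - lamC * (1 - lamH) * eC
      - lamH * (1 - lamC) * eH + lamH * lamC * Real.exp (-(βH + βC) * ω)) = _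
    rw [hprod]
  field_simp
  rw [hN, hDval]
  ring
end

section
/- Let β_H, β_C, ω > 0. For λ_H = λ_C = 1, the unique cyclic state of the three-stroke engine is p* = 1/(1 + e^{−(β_H+β_C)ω}), the work per cycle at p* equals ω·(2e^{−β_Hω}/(1 + e^{−(β_H+β_C)ω}) − 1), and the efficiency at p* equals 1 − (1 − e^{−β_Hω})/(e^{−β_Hω} − e^{−(β_H+β_C)ω}). -/
/-- For unrestricted thermal operations (`λH = λC = 1`): the unique cyclic
state is `p* = 1/(1 + e^{-(βH+βC)ω})`, the work per cycle at `p*` equals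
`ω (2 e^{-βH ω}/(1 + e^{-(βH+βC)ω}) - 1)` and the efficiency at `p*` equals
`1 - (1 - e^{-βH ω})/(e^{-βH ω} - e^{-(βH+βC)ω})`. -/
theorem three_stroke_unrestricted_performance
    (βH βC ω : ℝ) (hβH : 0 < βH) (hβC : 0 < βC) (hω : 0 < ω) :
    let pstar : ℝ := 1 / (1 + Real.exp (-(βH + βC) * ω))
    (1 - pstar * Real.exp (-(βH + βC) * ω) = pstar ∧
      ∀ q : ℝ, 1 - q * Real.exp (-(βH + βC) * ω) = q → q = pstar) ∧
    ω * (2 * pstar * Real.exp (-βH * ω) - 1) =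
      ω * (2 * Real.exp (-βH * ω) / (1 + Real.exp (-(βH + βC) * ω)) - 1) ∧
    ω * (2 * pstar * Real.exp (-βH * ω) - 1) /
        (ω * (pstar * Real.exp (-βH * ω) + pstar - 1)) =
      1 - (1 - Real.exp (-βH * ω)) /
        (Real.exp (-βH * ω) - Real.exp (-(βH + βC) * ω)) := by
  intro pstar
  set E := Real.exp (-(βH + βC) * ω) with hE
  set A := Real.exp (-βH * ω) with hA
  have hEpos : 0 < E := Real.exp_pos _
  have h1E : (0:ℝ) < 1 + E := by linarith
  have h1E' : (1:ℝ) + E ≠ 0 := ne_of_gt h1E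
  have hAE : E < A := by
    rw [hE, hA]
    apply Real.exp_lt_exp.mpr
    nlinarith
  have hAEne : A - E ≠ 0 := by linarith
  have hωne : ω ≠ 0 := ne_of_gt hω
  have hp : pstar = 1 / (1 + E) := rfl
  refine ⟨⟨?_, ?_⟩, ?_, ?_⟩
  · rw [hp]; field_simp; ring
  · intro q hq
    rw [hp]
    have : q * (1 + E) = 1 := by linarith
    field_simp
    linarith
  · rw [hp]; ring
  · rw [hp]
    have key : ω * (2 * (1 / (1 + E)) * A - 1) = (1 - (1 - A) / (A - E)) *
        (ω * (1 / (1 + E) * A + 1 / (1 + E) - 1)) := by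
      field_simp
      ring
    rw [key, mul_div_assoc]
    rw [div_self, mul_one]
    intro h
    have : (1:ℝ) / (1 + E) * A + 1 / (1 + E) - 1 = 0 := by
      rcases mul_eq_zero.mp h with h' | h'
      · exact absurd h' hωne
      · exact h'
    have h2 : A - E = 0 := by
      field_simp at this
      linarith
    exact hAEne h2
end

section
/- Let ω > 0 and 0 < β_H < β_C. For λ_H = 1 and λ_C = 1/(1 + e^{−β_Cω}), the work per cycle of the three-stroke engine at its unique cyclic state equals ω·(2e^{−β_Hω}/(1 + e^{−β_Cω}) − 1), and its efficiency equals 1 − (1 − e^{−β_Hω})/(e^{−β_Hω} − e^{−β_Cω}). -/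
/-- Open-cycle engine: with `λH = 1` and `λC = 1/(1 + e^{-βC ω})` (full
thermalization in the cold stroke), the three-stroke engine has a unique
cyclic state, at which the work per cycle equals
`ω (2 e^{-βH ω}/(1 + e^{-βC ω}) - 1)` and the efficiency equals
`1 - (1 - e^{-βH ω})/(e^{-βH ω} - e^{-βC ω})`. -/
theorem open_cycle_engine_performance
    (βH βC ω : ℝ) (hω : 0 < ω) (hβH : 0 < βH) (hβ : βH < βC) :
    let lamH : ℝ := 1
    let lamC : ℝ := 1 / (1 + Real.exp (-βC * ω))
    -- heat stroke on the ground population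
    let g : ℝ → ℝ := fun p => lamH * (1 - p * Real.exp (-βH * ω)) + (1 - lamH) * p
    -- ground population after the swap work stroke
    let z : ℝ → ℝ := fun p => 1 - g p
    -- full cycle map (cold stroke after the swap)
    let Φ : ℝ → ℝ := fun p => lamC * (1 - z p * Real.exp (-βC * ω)) + (1 - lamC) * z p
    let W : ℝ → ℝ := fun p => ω * (1 - 2 * g p)
    let QH : ℝ → ℝ := fun p => ω * (p - g p)
    (∃! p : ℝ, Φ p = p) ∧
    ∀ p : ℝ, Φ p = p →
      W p = ω * (2 * Real.exp (-βH * ω) / (1 + Real.exp (-βC * ω)) - 1) ∧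
      W p / QH p =
        1 - (1 - Real.exp (-βH * ω)) / (Real.exp (-βH * ω) - Real.exp (-βC * ω)) := by
  intro lamH lamC g z Φ W QH
  set eH := Real.exp (-βH * ω) with heH
  set eC := Real.exp (-βC * ω) with heC
  have hC0 : (0:ℝ) < 1 + eC := by positivity
  have hCne : (1 + eC) ≠ 0 := ne_of_gt hC0
  have hΦ : ∀ p, Φ p = 1 / (1 + eC) := by
    intro p
    simp only [Φ, lamC, z, g, lamH, ← heH, ← heC]
    field_simp
    ring
  have hdiff : eC < eH := Real.exp_lt_exp.2 (by nlinarith)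
  have hne : eH - eC ≠ 0 := sub_ne_zero.2 (ne_of_gt hdiff)
  constructor
  · exact ⟨1 / (1 + eC), hΦ _, fun y hy => by rw [← hy, hΦ]⟩
  · intro p hp
    have hpval : p = 1 / (1 + eC) := by rw [← hp, hΦ]
    subst hpval
    constructor
    · simp only [W, g, lamH, ← heH, ← heC]; ring
    · simp only [W, QH, g, lamH, ← heH, ← heC]
      have hden : ω * ((1:ℝ) / (1 + eC) - (1 * (1 - 1 / (1 + eC) * eH) + (1 - 1) * (1 / (1 + eC))))
          = ω * (eH - eC) / (1 + eC) := by field_simp; ring_nf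
      rw [hden, div_eq_iff (by positivity), sub_mul, div_mul_eq_mul_div, one_mul]
      field_simp
      ring
end

section
/- Let β_H, ω > 0 and λ_H ∈ (0,1]. The function η*(p) := 1 − (2p − 1 − λ_H(p e^{−β_Hω} + p − 1)) / (λ_H(p e^{−β_Hω} + p − 1)) is strictly increasing on the set {p ∈ ℝ : p e^{−β_Hω} + p − 1 > 0}, i.e. on (1/(1 + e^{−β_Hω}), ∞). -/
/-- The efficiency `η*(p)` of the three-stroke engine is strictly increasing
in the ground population `p` on the region where the heat drawn from the hot
bath is positive. -/
theorem efficiency_strictMonoOn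
    (βH ω lamH : ℝ) (hβH : 0 < βH) (hω : 0 < ω)
    (hlamH : lamH ∈ Set.Ioc (0:ℝ) 1) :
    StrictMonoOn
      (fun p : ℝ =>
        1 - (2 * p - 1 - lamH * (p * Real.exp (-βH * ω) + p - 1)) /
          (lamH * (p * Real.exp (-βH * ω) + p - 1)))
      {p : ℝ | p * Real.exp (-βH * ω) + p - 1 > 0} := by
  intro x hx y hy hxy
  simp only [Set.mem_setOf_eq] at hx hy
  obtain ⟨hl0, hl1⟩ := hlamH
  have he0 : 0 < Real.exp (-βH * ω) := Real.exp_pos _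
  have he1 : Real.exp (-βH * ω) < 1 := by
    rw [Real.exp_lt_one_iff]; nlinarith
  dsimp only
  rw [sub_lt_sub_iff_left, div_lt_div_iff₀ (mul_pos hl0 hy) (mul_pos hl0 hx)]
  nlinarith [mul_pos hl0 (mul_pos (sub_pos.mpr hxy) (sub_pos.mpr he1))]
end

section
/- Let β_H, β_C, ω > 0 and λ_H ∈ [0,1]. For λ_C ∈ [0,1] define p(λ_C) := (1 − λ_H(1−λ_C) − λ_C(1−λ_H)e^{−β_Cω}) / (2 − λ_C(1−λ_H) − λ_H − λ_C(1−λ_H)e^{−β_Cω} − λ_H(1−λ_C)e^{−β_Hω} + λ_H λ_C e^{−(β_C+β_H)ω}). Then the denominator is positive for every λ_C ∈ [0,1], and λ_C ↦ p(λ_C) is strictly increasing on [0,1]; in particular, p(λ_C) ≤ p(λ_C^max) for all 0 ≤ λ_C ≤ λ_C^max ≤ 1. -/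
/-- The cyclic ground population `p(λC)` of the three-stroke engine has a
positive denominator and is strictly increasing in the cold-stroke weight
`λC` on `[0,1]`; in particular it is maximized at `λC = λC^max`. -/
theorem cyclic_population_monotone_in_lamC
    (βH βC ω lamH : ℝ) (hβH : 0 < βH) (hβC : 0 < βC) (hω : 0 < ω)
    (hlamH : lamH ∈ Set.Icc (0:ℝ) 1) :
    let denom : ℝ → ℝ := fun lamC =>
      2 - lamC * (1 - lamH) - lamH - lamC * (1 - lamH) * Real.exp (-βC * ω)
        - lamH * (1 - lamC) * Real.exp (-βH * ω)
        + lamH * lamC * Real.exp (-(βC + βH) * ω)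
    let p : ℝ → ℝ := fun lamC =>
      (1 - lamH * (1 - lamC) - lamC * (1 - lamH) * Real.exp (-βC * ω)) / denom lamC
    (∀ lamC ∈ Set.Icc (0:ℝ) 1, 0 < denom lamC) ∧
    StrictMonoOn p (Set.Icc (0:ℝ) 1) ∧
    ∀ lamC lamCmax : ℝ, 0 ≤ lamC → lamC ≤ lamCmax → lamCmax ≤ 1 →
      p lamC ≤ p lamCmax := by
  intro denom p
  obtain ⟨hm0, hm1⟩ := hlamH
  have ha : Real.exp (-βC * ω) = Real.exp (-βC * ω) := rfl
  set a := Real.exp (-βC * ω) with ha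
  set b := Real.exp (-βH * ω) with hb
  have hab : Real.exp (-(βC + βH) * ω) = a * b := by
    rw [ha, hb, ← Real.exp_add]; ring_nf
  have ha0 : 0 < a := Real.exp_pos _
  have hb0 : 0 < b := Real.exp_pos _
  have ha1 : a < 1 := by
    rw [ha]; apply Real.exp_lt_one_iff.mpr; nlinarith
  have hb1 : b < 1 := by
    rw [hb]; apply Real.exp_lt_one_iff.mpr; nlinarith
  have hD : ∀ z : ℝ, denom z = 2 - z * (1 - lamH) - lamH - z * (1 - lamH) * a
      - lamH * (1 - z) * b + lamH * z * (a * b) := by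
    intro z
    show 2 - z * (1 - lamH) - lamH - z * (1 - lamH) * a
        - lamH * (1 - z) * b + lamH * z * Real.exp (-(βC + βH) * ω) = _
    rw [hab]
  -- endpoint values of the (affine) denominator
  have hD0 : 0 < 2 - lamH - lamH * b := by
    have h1 : lamH * b ≤ b := mul_le_of_le_one_left hb0.le hm1
    linarith
  have hD1 : 0 < 1 - (1 - lamH) * a + lamH * (a * b) := by
    have h1 : (1 - lamH) * a ≤ a := mul_le_of_le_one_left ha0.le (by linarith)
    have h2 : 0 ≤ lamH * (a * b) := mul_nonneg hm0 (mul_pos ha0 hb0).le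
    linarith
  have hdenom : ∀ lamC ∈ Set.Icc (0:ℝ) 1, 0 < denom lamC := by
    intro x hx
    obtain ⟨hx0, hx1⟩ := hx
    rw [hD]
    rcases le_total (2 - lamH - lamH * b) (1 - (1 - lamH) * a + lamH * (a * b)) with h | h
    · nlinarith [mul_nonneg hx0 (sub_nonneg.2 h)]
    · nlinarith [mul_nonneg (sub_nonneg.2 hx1) (sub_nonneg.2 h)]
  have hW : 0 < 1 - lamH * b - (1 - lamH) * a := by
    rcases le_total a b with h | h
    · nlinarith [mul_nonneg (sub_nonneg.2 hm1) (sub_nonneg.2 h)]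
    · nlinarith [mul_nonneg hm0 (sub_nonneg.2 h)]
  have hmono : StrictMonoOn p (Set.Icc (0:ℝ) 1) := by
    intro x hx y hy hxy
    have hdx := hdenom x hx
    have hdy := hdenom y hy
    show (1 - lamH * (1 - x) - x * (1 - lamH) * a) / denom x
        < (1 - lamH * (1 - y) - y * (1 - lamH) * a) / denom y
    rw [div_lt_div_iff₀ hdx hdy, hD, hD]
    nlinarith [mul_pos (sub_pos.2 hxy) hW]
  refine ⟨hdenom, hmono, ?_⟩
  intro x y hx0 hxy hy1
  exact hmono.monotoneOn ⟨hx0, le_trans hxy hy1⟩ ⟨le_trans hx0 hxy, hy1⟩ hxy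
end

section
/- Let β, ω > 0 and let γ := (1/(1 + e^{−βω}), e^{−βω}/(1 + e^{−βω})) ∈ ℝ². A 2×2 real matrix T with nonnegative entries whose columns each sum to 1 satisfies T·γ = γ if and only if there exists a (necessarily unique) λ ∈ [0,1] such that T = λ·E_β + (1−λ)·I, where E_β is the matrix with first row (1 − e^{−βω}, 1) and second row (e^{−βω}, 0) and I is the 2×2 identity matrix. -/
/-- A 2×2 column-stochastic matrix fixes the qubit Gibbs distribution iff it
is a (unique) convex combination of the extremal thermal process `Eβ` and the
identity. -/
theorem gibbs_stochastic_qubit_characterization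
    (β ω : ℝ) (hβ : 0 < β) (hω : 0 < ω)
    (T : Matrix (Fin 2) (Fin 2) ℝ)
    (hpos : ∀ i j, 0 ≤ T i j)
    (hcol : ∀ j, T 0 j + T 1 j = 1) :
    let E : ℝ := Real.exp (-β * ω)
    let γ : Fin 2 → ℝ := ![1 / (1 + E), E / (1 + E)]
    let Eβ : Matrix (Fin 2) (Fin 2) ℝ := !![1 - E, 1; E, 0]
    (T.mulVec γ = γ ↔
      ∃! lam : ℝ, lam ∈ Set.Icc (0:ℝ) 1 ∧
        T = lam • Eβ + (1 - lam) • (1 : Matrix (Fin 2) (Fin 2) ℝ)) := by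
  intro E γ Eβ
  have hE : 0 < E := Real.exp_pos _
  have hE1 : (0:ℝ) < 1 + E := by linarith
  constructor
  · intro hfix
    have h0 := congrFun hfix 0
    simp only [Matrix.mulVec, dotProduct, Fin.sum_univ_two, γ,
      Matrix.cons_val_zero, Matrix.cons_val_one, Matrix.head_cons] at h0
    have key : T 0 0 + T 0 1 * E = 1 := by
      field_simp at h0; linarith
    refine ⟨T 0 1, ⟨⟨hpos 0 1, ?_⟩, ?_⟩, ?_⟩
    · have h1 := hcol 1; have h2 := hpos 1 1; linarith
    · ext i j
      fin_cases i <;> fin_cases j <;>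
        simp [Eβ, Matrix.one_apply] <;> nlinarith [hcol 0, hcol 1]
    · rintro lam' ⟨_, hT⟩
      have := congrFun (congrFun hT 0) 1
      simp [Eβ, Matrix.one_apply] at this
      linarith
  · rintro ⟨lam, ⟨⟨h0, h1⟩, hT⟩, _⟩
    subst hT
    funext i
    fin_cases i <;>
      simp [Matrix.mulVec, dotProduct, Fin.sum_univ_two, γ, Eβ,
        Matrix.one_apply] <;>
      field_simp <;> ring
end

section
/- Let d ≥ 1 be an integer and β, ω > 0. Let H_S = ω|1⟩⟨1| on ℂ², H_E = ω·Σ_{n=0}^{d} n|n⟩⟨n| on ℂ^{d+1}, γ_E the diagonal matrix with entries e^{−βnω}/Z for n = 0,…,d where Z := Σ_{n=0}^{d} e^{−βnω}, and for p ∈ [0,1] let σ_p := diag(p, 1−p). Let H_tot := H_S ⊗ I_{d+1} + I_2 ⊗ H_E on ℂ² ⊗ ℂ^{d+1}. Then for every unitary 2(d+1)×2(d+1) complex matrix U with U·H_tot = H_tot·U, there exists λ ∈ [0, λ^max] with λ^max := (1 − e^{−βωd})/(1 − e^{−βω(d+1)}) such that for every p ∈ [0,1] the output ground population p'(U,p)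 := Σ_{n=0}^{d} ⟨(0,n)|U(σ_p ⊗ γ_E)U†|(0,n)⟩ satisfies p'(U,p) = (1−λ)·p + λ·(1 − p·e^{−βω}). -/
open Matrix Kronecker

/-- The total Hamiltonian is diagonal with energies `ω (s + n)`. -/
private lemma aux_Htot (d : ℕ) (ω : ℝ) :
    (!![0, 0; 0, (ω : ℂ)] ⊗ₖ (1 : Matrix (Fin (d + 1)) (Fin (d + 1)) ℂ)
      + (1 : Matrix (Fin 2) (Fin 2) ℂ) ⊗ₖ
          Matrix.diagonal (fun n : Fin (d + 1) => (ω : ℂ) * ((n : ℕ) : ℂ)))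
    = Matrix.diagonal
        (fun x : Fin 2 × Fin (d + 1) => (ω : ℂ) * (((x.1 : ℕ) + (x.2 : ℕ) : ℕ) : ℂ)) := by
  ext ⟨a, b⟩ ⟨c, e⟩
  simp only [Matrix.add_apply, Matrix.kroneckerMap_apply, Matrix.one_apply,
    Matrix.diagonal_apply, Prod.mk.injEq]
  fin_cases a <;> fin_cases c <;> rcases eq_or_ne b e with h | h <;>
    simp [h] <;> push_cast <;> ring

/-- The input state is diagonal. -/
private lemma aux_rho (d : ℕ) (β ω Z p : ℝ) :
    (!![((p : ℝ) : ℂ), 0; 0, ((1 - p : ℝ) : ℂ)] ⊗ₖ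
      Matrix.diagonal (fun n : Fin (d + 1) => ((Real.exp (-β * ω * ((n : ℕ) : ℝ)) / Z : ℝ) : ℂ)))
    = Matrix.diagonal (fun x : Fin 2 × Fin (d + 1) =>
        (if x.1 = 0 then ((p : ℝ) : ℂ) else ((1 - p : ℝ) : ℂ)) *
          ((Real.exp (-β * ω * ((x.2 : ℕ) : ℝ)) / Z : ℝ) : ℂ)) := by
  ext ⟨a, b⟩ ⟨c, e⟩
  simp only [Matrix.kroneckerMap_apply, Matrix.diagonal_apply, Prod.mk.injEq]
  fin_cases a <;> fin_cases c <;> rcases eq_or_ne b e with h | h <;> simp [h]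

/-- Core computation: an energy-block-diagonal unitary acts on diagonal states as a
mixture of the identity and the extremal thermal process. -/
private lemma main_aux (d : ℕ) (q Z : ℝ) (hq0 : 0 < q) (hq1 : q < 1)
    (hZ : Z = ∑ n ∈ Finset.range (d + 1), q ^ n)
    (U : Matrix (Fin 2 × Fin (d + 1)) (Fin 2 × Fin (d + 1)) ℂ)
    (hUU : U * Uᴴ = 1) (hUU' : Uᴴ * U = 1)
    (hU0 : ∀ x y : Fin 2 × Fin (d + 1),
      (x.1 : ℕ) + (x.2 : ℕ) ≠ (y.1 : ℕ) + (y.2 : ℕ) → U x y = 0) :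
    ∃ lam : ℝ, 0 ≤ lam ∧ lam ≤ (1 - q ^ d) / (1 - q ^ (d + 1)) ∧
      ∀ p : ℝ,
        (∑ n : Fin (d + 1),
          (U * Matrix.diagonal (fun x : Fin 2 × Fin (d + 1) =>
              (if x.1 = 0 then ((p : ℝ) : ℂ) else ((1 - p : ℝ) : ℂ)) *
                ((q ^ (x.2 : ℕ) / Z : ℝ) : ℂ)) * Uᴴ) ((0 : Fin 2), n) ((0 : Fin 2), n))
        = (((1 - lam) * p + lam * (1 - p * q) : ℝ) : ℂ) := by
  have hqne : q ≠ 1 := ne_of_lt hq1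
  have hZpos : 0 < Z := by
    rw [hZ]
    exact Finset.sum_pos (fun i _ => pow_pos hq0 _) (by simp)
  have hZne : Z ≠ 0 := ne_of_gt hZpos
  set g : Fin (d + 1) → ℝ := fun m => q ^ (m : ℕ) / Z with hgdef
  have hgnonneg : ∀ m, 0 ≤ g m := fun m => div_nonneg (pow_pos hq0 _).le hZpos.le
  have hgsum : (∑ m : Fin (d + 1), g m) = 1 := by
    rw [hgdef, ← Finset.sum_div, Fin.sum_univ_eq_sum_range (fun i => q ^ i), ← hZ,
      div_self hZne]
  set N : (Fin 2 × Fin (d + 1)) → (Fin 2 × Fin (d + 1)) → ℝ :=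
    fun x y => Complex.normSq (U x y) with hNdef
  have hN0 : ∀ x y, (x.1 : ℕ) + (x.2 : ℕ) ≠ (y.1 : ℕ) + (y.2 : ℕ) → N x y = 0 := by
    intro x y h
    rw [hNdef]
    simp [hU0 x y h]
  have hNnn : ∀ x y, 0 ≤ N x y := fun x y => Complex.normSq_nonneg _
  have hrow : ∀ x, (∑ y, N x y) = 1 := by
    intro x
    have h1 : (∑ y, ((N x y : ℝ) : ℂ)) = 1 := by
      have h2 := congrFun (congrFun hUU x) x
      rw [Matrix.mul_apply] at h2
      simpa [Matrix.conjTranspose_apply, Complex.star_def, Complex.mul_conj,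
        Matrix.one_apply_eq, hNdef] using h2
    exact_mod_cast h1
  have hcol : ∀ y, (∑ x, N x y) = 1 := by
    intro y
    have h1 : (∑ x, ((N x y : ℝ) : ℂ)) = 1 := by
      have h2 := congrFun (congrFun hUU' y) y
      rw [Matrix.mul_apply] at h2
      have h3 : ∀ x, Uᴴ y x * U x y = ((N x y : ℝ) : ℂ) := by
        intro x
        rw [Matrix.conjTranspose_apply, Complex.star_def, hNdef]
        rw [mul_comm, Complex.mul_conj]
      rw [Finset.sum_congr rfl fun x _ => h3 x] at h2
      simpa using h2
    exact_mod_cast h1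
  set A : Fin (d + 1) → ℝ := fun n => ∑ m, N ((0 : Fin 2), n) ((0 : Fin 2), m) with hAdef
  set B : Fin (d + 1) → ℝ := fun n => ∑ m, N ((0 : Fin 2), n) ((1 : Fin 2), m) with hBdef
  set lam : ℝ := ∑ n, ∑ m, N ((0 : Fin 2), n) ((1 : Fin 2), m) * g m with hlamdef
  have fact1 : ∀ n, A n + B n = 1 := by
    intro n
    have h1 := hrow ((0 : Fin 2), n)
    rw [Fintype.sum_prod_type, Fin.sum_univ_two] at h1
    exact h1
  have fact2 : ∀ n, (∑ m, N ((0 : Fin 2), n) ((0 : Fin 2), m) * g m) = A n * g n := by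
    intro n
    rw [hAdef, Finset.sum_mul]
    refine Finset.sum_congr rfl fun m _ => ?_
    rcases eq_or_ne m n with h | h
    · rw [h]
    · have hz : N ((0 : Fin 2), n) ((0 : Fin 2), m) = 0 := by
        apply hN0
        simp only [Fin.val_zero]
        intro hc
        exact h (Fin.ext (by omega))
      rw [hz, zero_mul, zero_mul]
  have fact3 : ∀ n, B n * g n = q * (∑ m, N ((0 : Fin 2), n) ((1 : Fin 2), m) * g m) := by
    intro n
    rw [hBdef, Finset.sum_mul, Finset.mul_sum]
    refine Finset.sum_congr rfl fun m _ => ?_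
    rcases eq_or_ne (n : ℕ) ((m : ℕ) + 1) with h | h
    · have hg : g n = q * g m := by
        rw [hgdef]
        simp only
        rw [h, pow_succ]
        ring
      rw [hg]
      ring
    · have hz : N ((0 : Fin 2), n) ((1 : Fin 2), m) = 0 := by
        apply hN0
        simp only [Fin.val_zero, Fin.val_one]
        omega
      rw [hz]
      ring
  have hlam0 : 0 ≤ lam :=
    Finset.sum_nonneg fun n _ => Finset.sum_nonneg fun m _ =>
      mul_nonneg (hNnn _ _) (hgnonneg m)
  have hlamle : lam ≤ (1 - q ^ d) / (1 - q ^ (d + 1)) := by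
    have hswap : lam = ∑ m, (∑ n, N ((0 : Fin 2), n) ((1 : Fin 2), m)) * g m := by
      rw [hlamdef, Finset.sum_comm]
      exact Finset.sum_congr rfl fun m _ => (Finset.sum_mul _ _ _).symm
    have hstep : ∀ m : Fin (d + 1),
        (∑ n, N ((0 : Fin 2), n) ((1 : Fin 2), m)) * g m
          ≤ if (m : ℕ) < d then g m else 0 := by
      intro m
      by_cases h : (m : ℕ) < d
      · rw [if_pos h]
        have h1 : (∑ n, N ((0 : Fin 2), n) ((1 : Fin 2), m)) ≤ 1 := by
          have h2 := hcol ((1 : Fin 2), m)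
          rw [Fintype.sum_prod_type, Fin.sum_univ_two] at h2
          have h3 : 0 ≤ ∑ n, N ((1 : Fin 2), n) ((1 : Fin 2), m) :=
            Finset.sum_nonneg fun _ _ => hNnn _ _
          linarith
        calc (∑ n, N ((0 : Fin 2), n) ((1 : Fin 2), m)) * g m
            ≤ 1 * g m := mul_le_mul_of_nonneg_right h1 (hgnonneg m)
          _ = g m := one_mul _
      · rw [if_neg h]
        have hz : ∀ n : Fin (d + 1), N ((0 : Fin 2), n) ((1 : Fin 2), m) = 0 := by
          intro n
          apply hN0
          simp only [Fin.val_zero, Fin.val_one]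
          have h4 : (n : ℕ) < d + 1 := n.isLt
          have h5 : (m : ℕ) < d + 1 := m.isLt
          omega
        rw [Finset.sum_eq_zero fun n _ => hz n, zero_mul]
    have hiflt : (∑ m : Fin (d + 1), (if (m : ℕ) < d then g m else 0))
        = (∑ i ∈ Finset.range d, q ^ i) / Z := by
      rw [show (∑ m : Fin (d + 1), (if (m : ℕ) < d then g m else 0))
            = ∑ i ∈ Finset.range (d + 1), (if i < d then q ^ i / Z else 0) from
          Fin.sum_univ_eq_sum_range (fun i => if i < d then q ^ i / Z else 0) (d + 1)]
      rw [Finset.sum_range_succ, if_neg (lt_irrefl d), add_zero]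
      rw [show (∑ i ∈ Finset.range d, (if i < d then q ^ i / Z else 0))
            = ∑ i ∈ Finset.range d, q ^ i / Z from
          Finset.sum_congr rfl fun i hi => if_pos (Finset.mem_range.mp hi)]
      rw [← Finset.sum_div]
    have hqd1 : q ^ (d + 1) < 1 := pow_lt_one₀ hq0.le hq1 (by omega)
    have hne2 : q - 1 ≠ 0 := by intro hc; exact hqne (by linarith)
    calc lam = ∑ m, (∑ n, N ((0 : Fin 2), n) ((1 : Fin 2), m)) * g m := hswap
      _ ≤ ∑ m : Fin (d + 1), (if (m : ℕ) < d then g m else 0) :=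
          Finset.sum_le_sum fun m _ => hstep m
      _ = (∑ i ∈ Finset.range d, q ^ i) / Z := hiflt
      _ = (q ^ d - 1) / (q ^ (d + 1) - 1) := by
          rw [geom_sum_eq hqne d, hZ, geom_sum_eq hqne (d + 1),
            div_div_div_cancel_right₀ hne2]
      _ = (1 - q ^ d) / (1 - q ^ (d + 1)) := by
          rw [← neg_div_neg_eq]
          ring_nf
  have hBsum : (∑ n, B n * g n) = q * lam := by
    rw [hlamdef, Finset.mul_sum]
    exact Finset.sum_congr rfl fun n _ => fact3 n
  have hAsum : (∑ n, A n * g n) = 1 - q * lam := by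
    have h1 : ∀ n, A n * g n = g n - B n * g n := by
      intro n
      have h2 : A n = 1 - B n := by linarith [fact1 n]
      rw [h2]
      ring
    rw [Finset.sum_congr rfl fun n _ => h1 n, Finset.sum_sub_distrib, hgsum, hBsum]
  refine ⟨lam, hlam0, hlamle, ?_⟩
  intro p
  have hdiag : ∀ n : Fin (d + 1),
      (U * Matrix.diagonal (fun x : Fin 2 × Fin (d + 1) =>
          (if x.1 = 0 then ((p : ℝ) : ℂ) else ((1 - p : ℝ) : ℂ)) *
            ((q ^ (x.2 : ℕ) / Z : ℝ) : ℂ)) * Uᴴ) ((0 : Fin 2), n) ((0 : Fin 2), n)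
      = ((∑ m, N ((0 : Fin 2), n) ((0 : Fin 2), m) * (p * g m)
          + ∑ m, N ((0 : Fin 2), n) ((1 : Fin 2), m) * ((1 - p) * g m) : ℝ) : ℂ) := by
    intro n
    rw [Matrix.mul_apply]
    have e1 : ∀ y, (U * Matrix.diagonal (fun x : Fin 2 × Fin (d + 1) =>
        (if x.1 = 0 then ((p : ℝ) : ℂ) else ((1 - p : ℝ) : ℂ)) *
          ((q ^ (x.2 : ℕ) / Z : ℝ) : ℂ))) ((0 : Fin 2), n) y * Uᴴ y ((0 : Fin 2), n)
        = ((if y.1 = 0 then ((p : ℝ) : ℂ) else ((1 - p : ℝ) : ℂ)) *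
            ((q ^ (y.2 : ℕ) / Z : ℝ) : ℂ)) * ((N ((0 : Fin 2), n) y : ℝ) : ℂ) := by
      intro y
      rw [Matrix.mul_diagonal, Matrix.conjTranspose_apply, Complex.star_def, hNdef]
      rw [show U ((0 : Fin 2), n) y *
            ((if y.1 = 0 then ((p : ℝ) : ℂ) else ((1 - p : ℝ) : ℂ)) *
              ((q ^ (y.2 : ℕ) / Z : ℝ) : ℂ)) *
            (starRingEnd ℂ) (U ((0 : Fin 2), n) y)
          = ((if y.1 = 0 then ((p : ℝ) : ℂ) else ((1 - p : ℝ) : ℂ)) *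
              ((q ^ (y.2 : ℕ) / Z : ℝ) : ℂ)) *
            (U ((0 : Fin 2), n) y * (starRingEnd ℂ) (U ((0 : Fin 2), n) y)) from by ring]
      rw [Complex.mul_conj]
    rw [Finset.sum_congr rfl fun y _ => e1 y]
    rw [Fintype.sum_prod_type, Fin.sum_univ_two]
    push_cast
    congr 1
    · refine Finset.sum_congr rfl fun m _ => ?_
      simp only [hgdef]
      push_cast
      ring
    · refine Finset.sum_congr rfl fun m _ => ?_
      simp only [hgdef]
      push_cast
      ring
  rw [Finset.sum_congr rfl fun n _ => hdiag n, ← Complex.ofReal_sum]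
  congr 1
  have hsplit : (∑ n, (∑ m, N ((0 : Fin 2), n) ((0 : Fin 2), m) * (p * g m)
      + ∑ m, N ((0 : Fin 2), n) ((1 : Fin 2), m) * ((1 - p) * g m)))
      = p * (∑ n, A n * g n) + (1 - p) * lam := by
    rw [Finset.sum_add_distrib]
    congr 1
    · rw [Finset.mul_sum]
      refine Finset.sum_congr rfl fun n _ => ?_
      rw [← fact2 n, Finset.mul_sum]
      exact Finset.sum_congr rfl fun m _ => by ring
    · rw [hlamdef, Finset.mul_sum]
      refine Finset.sum_congr rfl fun n _ => ?_
      rw [Finset.mul_sum]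
      exact Finset.sum_congr rfl fun m _ => by ring
  rw [hsplit, hAsum]
  ring

/-- Finite-bath theorem (necessity): every energy-conserving unitary on a
two-level system coupled to a resonant truncated harmonic-oscillator bath of
dimension `d+1` induces, on diagonal system states, a mixture of the identity
and the extremal thermal process with weight `λ ∈ [0, λ^max]`, where
`λ^max = (1 - e^{-βωd})/(1 - e^{-βω(d+1)})`. -/
theorem finite_bath_thermal_operation_range
    (d : ℕ) (hd : 1 ≤ d) (β ω : ℝ) (hβ : 0 < β) (hω : 0 < ω) :
    let HS : Matrix (Fin 2) (Fin 2) ℂ := !![0, 0; 0, (ω : ℂ)]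
    let HE : Matrix (Fin (d + 1)) (Fin (d + 1)) ℂ :=
      Matrix.diagonal fun n => (ω : ℂ) * ((n : ℕ) : ℂ)
    let Z : ℝ := ∑ n : Fin (d + 1), Real.exp (-β * ω * ((n : ℕ) : ℝ))
    let γE : Matrix (Fin (d + 1)) (Fin (d + 1)) ℂ :=
      Matrix.diagonal fun n => ((Real.exp (-β * ω * ((n : ℕ) : ℝ)) / Z : ℝ) : ℂ)
    let σ : ℝ → Matrix (Fin 2) (Fin 2) ℂ := fun p => !![((p : ℝ) : ℂ), 0; 0, ((1 - p : ℝ) : ℂ)]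
    let Htot : Matrix (Fin 2 × Fin (d + 1)) (Fin 2 × Fin (d + 1)) ℂ :=
      HS ⊗ₖ (1 : Matrix (Fin (d + 1)) (Fin (d + 1)) ℂ)
        + (1 : Matrix (Fin 2) (Fin 2) ℂ) ⊗ₖ HE
    let lamMax : ℝ :=
      (1 - Real.exp (-β * ω * (d : ℝ))) / (1 - Real.exp (-β * ω * ((d : ℝ) + 1)))
    ∀ U : Matrix (Fin 2 × Fin (d + 1)) (Fin 2 × Fin (d + 1)) ℂ,
      U ∈ Matrix.unitaryGroup (Fin 2 × Fin (d + 1)) ℂ →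
      U * Htot = Htot * U →
      ∃ lam : ℝ, lam ∈ Set.Icc 0 lamMax ∧
        ∀ p : ℝ, p ∈ Set.Icc (0:ℝ) 1 →
          (∑ n : Fin (d + 1),
              (U * (σ p ⊗ₖ γE) * Uᴴ) ((0 : Fin 2), n) ((0 : Fin 2), n)) =
          (((1 - lam) * p + lam * (1 - p * Real.exp (-β * ω)) : ℝ) : ℂ) := by
  intro HS HE Z γE σ Htot lamMax U hU hcomm
  have hβω : (0 : ℝ) < β * ω := mul_pos hβ hω
  have hq1 : Real.exp (-β * ω) < 1 := by
    rw [Real.exp_lt_one_iff]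
    linarith
  have hqpow : ∀ m : ℕ, Real.exp (-β * ω * (m : ℝ)) = Real.exp (-β * ω) ^ m := by
    intro m
    rw [show -β * ω * (m : ℝ) = (m : ℝ) * (-β * ω) by ring, Real.exp_nat_mul]
  have hZr : Z = ∑ n ∈ Finset.range (d + 1), Real.exp (-β * ω) ^ n := by
    show (∑ n : Fin (d + 1), Real.exp (-β * ω * ((n : ℕ) : ℝ))) = _
    rw [Finset.sum_congr rfl fun (n : Fin (d + 1)) _ => hqpow (n : ℕ)]
    exact Fin.sum_univ_eq_sum_range (fun i => Real.exp (-β * ω) ^ i) (d + 1)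
  have hHtot : Htot = Matrix.diagonal
      (fun x : Fin 2 × Fin (d + 1) => (ω : ℂ) * (((x.1 : ℕ) + (x.2 : ℕ) : ℕ) : ℂ)) :=
    aux_Htot d ω
  have hU0 : ∀ x y : Fin 2 × Fin (d + 1),
      (x.1 : ℕ) + (x.2 : ℕ) ≠ (y.1 : ℕ) + (y.2 : ℕ) → U x y = 0 := by
    intro x y hne
    rw [hHtot] at hcomm
    have h1 := congrFun (congrFun hcomm x) y
    rw [Matrix.mul_diagonal, Matrix.diagonal_mul] at h1
    by_contra hne0
    apply hne
    have hωne : (ω : ℂ) ≠ 0 := Complex.ofReal_ne_zero.mpr (ne_of_gt hω)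
    have h3 : U x y * (ω : ℂ) * ((((y.1 : ℕ) + (y.2 : ℕ) : ℕ)) : ℂ)
        = U x y * (ω : ℂ) * ((((x.1 : ℕ) + (x.2 : ℕ) : ℕ)) : ℂ) := by
      push_cast at h1 ⊢
      linear_combination h1
    have h4 := mul_left_cancel₀ (mul_ne_zero hne0 hωne) h3
    exact_mod_cast h4.symm
  have hUU : U * Uᴴ = 1 := by
    rw [← Matrix.star_eq_conjTranspose]
    exact Matrix.mem_unitaryGroup_iff.mp hU
  have hUU' : Uᴴ * U = 1 := by
    rw [← Matrix.star_eq_conjTranspose]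
    exact Matrix.mem_unitaryGroup_iff'.mp hU
  obtain ⟨lam, h0, hle, hmain⟩ :=
    main_aux d (Real.exp (-β * ω)) Z (Real.exp_pos _) hq1 hZr U hUU hUU' hU0
  have hlamMax : lamMax
      = (1 - Real.exp (-β * ω) ^ d) / (1 - Real.exp (-β * ω) ^ (d + 1)) := by
    show ((1 - Real.exp (-β * ω * (d : ℝ))) / (1 - Real.exp (-β * ω * ((d : ℝ) + 1)))) = _
    rw [show ((d : ℝ) + 1) = ((d + 1 : ℕ) : ℝ) by push_cast; ring, hqpow, hqpow]
  refine ⟨lam, ⟨h0, ?_⟩, ?_⟩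
  · rw [hlamMax]
    exact hle
  · intro p _
    have hρ : σ p ⊗ₖ γE = Matrix.diagonal (fun x : Fin 2 × Fin (d + 1) =>
        (if x.1 = 0 then ((p : ℝ) : ℂ) else ((1 - p : ℝ) : ℂ)) *
          ((Real.exp (-β * ω) ^ (x.2 : ℕ) / Z : ℝ) : ℂ)) := by
      have h1 : σ p ⊗ₖ γE = Matrix.diagonal (fun x : Fin 2 × Fin (d + 1) =>
          (if x.1 = 0 then ((p : ℝ) : ℂ) else ((1 - p : ℝ) : ℂ)) *
            ((Real.exp (-β * ω * ((x.2 : ℕ) : ℝ)) / Z : ℝ) : ℂ)) := aux_rho d β ω Z p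
      have hfe : (fun x : Fin 2 × Fin (d + 1) =>
          (if x.1 = 0 then ((p : ℝ) : ℂ) else ((1 - p : ℝ) : ℂ)) *
            ((Real.exp (-β * ω * ((x.2 : ℕ) : ℝ)) / Z : ℝ) : ℂ))
          = (fun x : Fin 2 × Fin (d + 1) =>
          (if x.1 = 0 then ((p : ℝ) : ℂ) else ((1 - p : ℝ) : ℂ)) *
            ((Real.exp (-β * ω) ^ (x.2 : ℕ) / Z : ℝ) : ℂ)) := by
        funext x
        rw [hqpow]
      rw [h1, hfe]
    rw [hρ]
    exact hmain p
end

section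
/- Let d ≥ 1 be an integer and β, ω > 0, and let λ^max := (1 − e^{−βωd})/(1 − e^{−βω(d+1)}). With H_S = ω|1⟩⟨1| on ℂ², H_E = ω·Σ_{n=0}^{d} n|n⟩⟨n| on ℂ^{d+1}, γ_E the diagonal matrix with entries e^{−βnω}/Z for Z := Σ_{n=0}^{d} e^{−βnω}, σ_p := diag(p, 1−p), and H_tot := H_S ⊗ I_{d+1} + I_2 ⊗ H_E: for every λ ∈ [0, λ^max] there exists a unitary 2(d+1)×2(d+1) complex matrix U with U·H_tot = H_tot·U such that for every p ∈ [0,1], Σ_{n=0}^{d} ⟨(0,n)|U(σ_p ⊗ γ_E)U†|(0,n)⟩ = (1−λ)·p + λ·(1 − p·e^{−βω}). -/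
open Matrix Kronecker

def Umat (d : ℕ) (c s : ℝ) :
    Matrix (Fin 2 × Fin (d+1)) (Fin 2 × Fin (d+1)) ℂ := fun i j =>
  if i.1 = 0 then
    if j.1 = 0 then
      (if (i.2 : ℕ) = (j.2 : ℕ) then (if (i.2 : ℕ) = 0 then 1 else (c : ℂ)) else 0)
    else (if (i.2 : ℕ) = (j.2 : ℕ) + 1 then (s : ℂ) else 0)
  else
    if j.1 = 0 then (if (j.2 : ℕ) = (i.2 : ℕ) + 1 then (-(s : ℂ)) else 0)
    else (if (i.2 : ℕ) = (j.2 : ℕ) then (if (i.2 : ℕ) = d then 1 else (c : ℂ)) else 0)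

lemma sumFin_pin {d : ℕ} (P : Fin (d+1) → Prop) [DecidablePred P] (g : Fin (d+1) → ℂ)
    (t : Fin (d+1)) (hP : ∀ m, P m ↔ m = t) :
    (∑ m : Fin (d+1), if P m then g m else 0) = g t := by
  have h : ∀ m ∈ Finset.univ, (if P m then g m else 0) = if m = t then g m else 0 := by
    intro m _
    by_cases h : P m
    · rw [if_pos h, if_pos ((hP m).mp h)]
    · rw [if_neg h, if_neg (fun hh => h ((hP m).mpr hh))]
  rw [Finset.sum_congr rfl h, Finset.sum_ite_eq']
  simp

lemma sumFin_zero {d : ℕ} (P : Fin (d+1) → Prop) [DecidablePred P] (g : Fin (d+1) → ℂ)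
    (hP : ∀ m, ¬ P m) :
    (∑ m : Fin (d+1), if P m then g m else 0) = 0 :=
  Finset.sum_eq_zero fun m _ => if_neg (hP m)

lemma Umat_mul_star (d : ℕ) (c s : ℝ) (hcs : c^2 + s^2 = 1) :
    Umat d c s * star (Umat d c s) = 1 := by
  have hcs' : (c:ℂ) * c + s * s = 1 := by
    have : ((c^2 + s^2 : ℝ) : ℂ) = ((1:ℝ):ℂ) := by rw [hcs]
    push_cast at this; linear_combination this
  ext ⟨b, n⟩ ⟨b', n'⟩
  rw [Matrix.mul_apply]
  simp only [Fintype.sum_prod_type, Fin.sum_univ_two, Matrix.star_apply, Umat,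
    Matrix.one_apply, Prod.mk.injEq]
  fin_cases b <;> fin_cases b' <;>
    simp only [Fin.isValue, if_true, if_false, one_ne_zero, zero_ne_one, reduceCtorEq,
      Fin.zero_eta, Fin.mk_one, apply_ite (star : ℂ → ℂ), star_zero, star_one,
      Complex.star_def, map_neg, Complex.conj_ofReal, ite_mul, mul_ite, mul_zero, zero_mul]
  · -- case 0,0
    by_cases h : n = n'
    · subst h
      by_cases hn : (n : ℕ) = 0
      · rw [sumFin_pin _ _ n (by intro m; rw [Fin.ext_iff]; omega),
            sumFin_zero _ _ (by intro m; omega)]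
        simp [hn]
      · rw [sumFin_pin _ _ n (by intro m; rw [Fin.ext_iff]; omega),
            sumFin_pin _ _ (⟨(n:ℕ)-1, by omega⟩ : Fin (d+1))
              (by intro m; rw [Fin.ext_iff]; simp; omega)]
        simp only [hn, if_false, if_true]
        have h1 : (n:ℕ) = (n:ℕ) - 1 + 1 := by omega
        rw [if_pos h1]
        simpa using hcs'
    · have hv : (n:ℕ) ≠ (n':ℕ) := fun hh => h (Fin.ext hh)
      refine Eq.trans (congrArg₂ (· + ·) (Finset.sum_eq_zero fun m _ => ?_)
        (Finset.sum_eq_zero fun m _ => ?_)) ?_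
      · split_ifs <;> first | rfl | (exfalso; omega)
      · split_ifs <;> first | rfl | (exfalso; omega)
      · simp [h]
  · -- case 0,1
    by_cases hnn : (n : ℕ) = (n' : ℕ) + 1
    · have h0 : (n:ℕ) ≠ 0 := by omega
      have hdd : (n':ℕ) ≠ d := by have := n.isLt; omega
      rw [sumFin_pin _ _ n (by intro m; rw [Fin.ext_iff]; omega),
          sumFin_pin _ _ n' (by intro m; rw [Fin.ext_iff]; omega)]
      simp only [if_pos rfl, if_neg h0, if_neg hdd, if_pos hnn]
      simp; ring
    · refine Eq.trans (congrArg₂ (· + ·) (Finset.sum_eq_zero fun m _ => ?_)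
        (Finset.sum_eq_zero fun m _ => ?_)) ?_
      · split_ifs <;> first | rfl | (exfalso; omega)
      · split_ifs <;> first | rfl | (exfalso; omega)
      · simp
  · -- case 1,0
    by_cases hnn : (n' : ℕ) = (n : ℕ) + 1
    · have h0 : (n':ℕ) ≠ 0 := by omega
      have hdd : (n:ℕ) ≠ d := by have := n'.isLt; omega
      rw [sumFin_pin _ _ n' (by intro m; rw [Fin.ext_iff]; omega),
          sumFin_pin _ _ n (by intro m; rw [Fin.ext_iff]; omega)]
      simp only [if_pos rfl, if_neg h0, if_neg hdd, if_pos hnn]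
      simp; ring
    · refine Eq.trans (congrArg₂ (· + ·) (Finset.sum_eq_zero fun m _ => ?_)
        (Finset.sum_eq_zero fun m _ => ?_)) ?_
      · split_ifs <;> first | rfl | (exfalso; omega)
      · split_ifs <;> first | rfl | (exfalso; omega)
      · simp
  · -- case 1,1
    by_cases h : n = n'
    · subst h
      by_cases hd : (n : ℕ) = d
      · refine Eq.trans (congrArg₂ (· + ·) (Finset.sum_eq_zero fun m _ => ?_)
          (sumFin_pin _ _ n (by intro m; rw [Fin.ext_iff]; omega))) ?_
        · have hm := m.isLt; split_ifs <;> first | rfl | (exfalso; omega)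
        · simp [hd]
      · rw [sumFin_pin _ _ (⟨(n:ℕ)+1, by have := n.isLt; omega⟩ : Fin (d+1))
              (by intro m; rw [Fin.ext_iff]; try omega),
            sumFin_pin _ _ n (by intro m; rw [Fin.ext_iff]; try omega)]
        simp only [if_pos rfl, if_neg hd]
        simp
        linear_combination hcs'
    · have hv : (n:ℕ) ≠ (n':ℕ) := fun hh => h (Fin.ext hh)
      refine Eq.trans (congrArg₂ (· + ·) (Finset.sum_eq_zero fun m _ => ?_)
        (Finset.sum_eq_zero fun m _ => ?_)) ?_
      · split_ifs <;> first | rfl | (exfalso; omega)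
      · split_ifs <;> first | rfl | (exfalso; omega)
      · simp [h]

lemma Htot_diag (d : ℕ) (ω : ℝ) :
    (!![0, 0; 0, (ω : ℂ)] ⊗ₖ (1 : Matrix (Fin (d+1)) (Fin (d+1)) ℂ)
      + (1 : Matrix (Fin 2) (Fin 2) ℂ) ⊗ₖ
          Matrix.diagonal (fun n : Fin (d+1) => (ω : ℂ) * ((n : ℕ) : ℂ)))
    = Matrix.diagonal
        (fun i : Fin 2 × Fin (d+1) => (ω : ℂ) * (((i.1 : ℕ) : ℂ) + ((i.2 : ℕ) : ℂ))) := by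
  ext ⟨a, m⟩ ⟨b, n⟩
  simp only [Matrix.add_apply, Matrix.kroneckerMap_apply, Matrix.one_apply,
    Matrix.diagonal_apply, Prod.mk.injEq]
  fin_cases a <;> fin_cases b <;> by_cases h : m = n <;>
    simp [h, Matrix.one_apply] <;> ring

lemma Umat_comm (d : ℕ) (c s ω : ℝ) :
    Umat d c s *
      Matrix.diagonal
        (fun i : Fin 2 × Fin (d+1) => (ω : ℂ) * (((i.1 : ℕ) : ℂ) + ((i.2 : ℕ) : ℂ)))
    = Matrix.diagonal
        (fun i : Fin 2 × Fin (d+1) => (ω : ℂ) * (((i.1 : ℕ) : ℂ) + ((i.2 : ℕ) : ℂ)))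
      * Umat d c s := by
  ext ⟨a, m⟩ ⟨b, n⟩
  rw [Matrix.mul_diagonal, Matrix.diagonal_mul]
  simp only [Umat]
  fin_cases a <;> fin_cases b <;>
    simp only [Fin.isValue, if_true, if_false, one_ne_zero, zero_ne_one, reduceCtorEq,
      Fin.zero_eta, Fin.mk_one] <;>
    split_ifs with h1 h2 <;> try ring
  all_goals rw [h1]
  all_goals try push_cast
  all_goals try ring

lemma kron_diag (d : ℕ) (p₀ p₁ : ℂ) (q : Fin (d+1) → ℂ) :
    (!![p₀, 0; 0, p₁] ⊗ₖ Matrix.diagonal q)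
      = Matrix.diagonal (fun i : Fin 2 × Fin (d+1) => (if i.1 = 0 then p₀ else p₁) * q i.2) := by
  ext ⟨a, m⟩ ⟨b, n⟩
  simp only [Matrix.kroneckerMap_apply, Matrix.diagonal_apply, Prod.mk.injEq]
  fin_cases a <;> fin_cases b <;> by_cases h : m = n <;> simp [h]

lemma sumFin_pin' {d : ℕ} (P : Fin (d+1) → Prop) [DecidablePred P] (g : Fin (d+1) → ℂ)
    (t : Fin (d+1)) (hP : ∀ m, P m ↔ m = t) :
    (∑ m : Fin (d+1), if P m then g m else 0) = g t := by
  have h : ∀ m ∈ Finset.univ, (if P m then g m else 0) = if m = t then g m else 0 := by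
    intro m _
    by_cases h : P m
    · rw [if_pos h, if_pos ((hP m).mp h)]
    · rw [if_neg h, if_neg (fun hh => h ((hP m).mpr hh))]
  rw [Finset.sum_congr rfl h, Finset.sum_ite_eq']
  simp

lemma Umat_pop (d : ℕ) (c s : ℝ) (Dd : Fin 2 × Fin (d+1) → ℂ) :
    (∑ n : Fin (d+1),
        (Umat d c s * Matrix.diagonal Dd * (Umat d c s)ᴴ) ((0 : Fin 2), n) ((0 : Fin 2), n))
    = Dd (0, 0) + ∑ i : Fin d,
        ((c:ℂ) * c * Dd (0, i.succ) + (s:ℂ) * s * Dd (1, i.castSucc)) := by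
  have key : ∀ n : Fin (d+1),
      (Umat d c s * Matrix.diagonal Dd * (Umat d c s)ᴴ) ((0 : Fin 2), n) ((0 : Fin 2), n)
      = (if (n:ℕ) = 0 then Dd (0, n)
          else (c:ℂ) * c * Dd (0, n) + (s:ℂ) * s * Dd (1, ⟨(n:ℕ)-1, by omega⟩)) := by
    intro n
    rw [Matrix.mul_apply]
    simp only [Matrix.mul_diagonal, Matrix.conjTranspose_apply, Umat,
      Fintype.sum_prod_type, Fin.sum_univ_two, Fin.isValue, if_true, if_false, one_ne_zero,
      zero_ne_one, reduceCtorEq, apply_ite (star : ℂ → ℂ), star_zero, star_one,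
      Complex.star_def, map_neg, Complex.conj_ofReal, ite_mul, mul_ite, mul_zero, zero_mul]
    rw [sumFin_pin' _ _ n (by intro m; rw [Fin.ext_iff]; try omega)]
    by_cases hn : (n:ℕ) = 0
    · rw [Finset.sum_eq_zero (fun m _ => by split_ifs <;> first | rfl | (exfalso; omega))]
      simp [hn]
    · rw [sumFin_pin' _ _ (⟨(n:ℕ)-1, by omega⟩ : Fin (d+1))
        (by intro m; rw [Fin.ext_iff]; simp only [Fin.val_mk]; omega)]
      have h1 : (n:ℕ) = (n:ℕ) - 1 + 1 := by omega
      simp only [if_neg hn, if_pos rfl, if_pos h1]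
      simp
      try ring
  rw [Finset.sum_congr rfl (fun n _ => key n)]
  rw [Fin.sum_univ_succ]
  norm_num only
  refine congrArg₂ (· + ·) rfl (Finset.sum_congr rfl fun i _ => ?_)
  have h1 : ((i.succ : Fin (d+1)) : ℕ) ≠ 0 := by simp
  rw [if_neg h1]
  have h2 : (⟨((i.succ : Fin (d+1)) : ℕ) - 1, by omega⟩ : Fin (d+1)) = i.castSucc :=
    Fin.ext (by simp)
  rw [h2]

/-- Finite-bath theorem (sufficiency): every mixing weight `λ ∈ [0, λ^max]`,
with `λ^max = (1 - e^{-βωd})/(1 - e^{-βω(d+1)})`, is realized by some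
energy-conserving unitary on a two-level system coupled to a resonant
truncated harmonic-oscillator bath of dimension `d+1`. -/
theorem finite_bath_thermal_operation_achievability
    (d : ℕ) (hd : 1 ≤ d) (β ω : ℝ) (hβ : 0 < β) (hω : 0 < ω) :
    let HS : Matrix (Fin 2) (Fin 2) ℂ := !![0, 0; 0, (ω : ℂ)]
    let HE : Matrix (Fin (d + 1)) (Fin (d + 1)) ℂ :=
      Matrix.diagonal fun n => (ω : ℂ) * ((n : ℕ) : ℂ)
    let Z : ℝ := ∑ n : Fin (d + 1), Real.exp (-β * ω * ((n : ℕ) : ℝ))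
    let γE : Matrix (Fin (d + 1)) (Fin (d + 1)) ℂ :=
      Matrix.diagonal fun n => ((Real.exp (-β * ω * ((n : ℕ) : ℝ)) / Z : ℝ) : ℂ)
    let σ : ℝ → Matrix (Fin 2) (Fin 2) ℂ := fun p => !![((p : ℝ) : ℂ), 0; 0, ((1 - p : ℝ) : ℂ)]
    let Htot : Matrix (Fin 2 × Fin (d + 1)) (Fin 2 × Fin (d + 1)) ℂ :=
      HS ⊗ₖ (1 : Matrix (Fin (d + 1)) (Fin (d + 1)) ℂ)
        + (1 : Matrix (Fin 2) (Fin 2) ℂ) ⊗ₖ HE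
    let lamMax : ℝ :=
      (1 - Real.exp (-β * ω * (d : ℝ))) / (1 - Real.exp (-β * ω * ((d : ℝ) + 1)))
    ∀ lam : ℝ, lam ∈ Set.Icc 0 lamMax →
      ∃ U : Matrix (Fin 2 × Fin (d + 1)) (Fin 2 × Fin (d + 1)) ℂ,
        U ∈ Matrix.unitaryGroup (Fin 2 × Fin (d + 1)) ℂ ∧
        U * Htot = Htot * U ∧
        ∀ p : ℝ, p ∈ Set.Icc (0:ℝ) 1 →
          (∑ n : Fin (d + 1),
              (U * (σ p ⊗ₖ γE) * Uᴴ) ((0 : Fin 2), n) ((0 : Fin 2), n)) =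
          (((1 - lam) * p + lam * (1 - p * Real.exp (-β * ω)) : ℝ) : ℂ) := by
  intro HS HE Z γE σ Htot lamMax lam hlam
  have hβω : 0 < β * ω := mul_pos hβ hω
  set x : ℝ := Real.exp (-β * ω) with hxdef
  have hx0 : 0 < x := Real.exp_pos _
  have hx1 : x < 1 := by
    rw [hxdef]
    have : -β * ω < 0 := by nlinarith
    calc Real.exp (-β * ω) < Real.exp 0 := Real.exp_lt_exp.mpr this
    _ = 1 := Real.exp_zero
  have hq : ∀ k : ℕ, Real.exp (-β * ω * (k : ℝ)) = x ^ k := by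
    intro k
    rw [hxdef, ← Real.exp_nat_mul]
    ring_nf
  have hZ : Z = ∑ k ∈ Finset.range (d+1), x ^ k := by
    show (∑ n : Fin (d+1), Real.exp (-β * ω * ((n:ℕ) : ℝ))) = _
    rw [Fin.sum_univ_eq_sum_range (fun k => Real.exp (-β * ω * (k : ℝ)))]
    exact Finset.sum_congr rfl fun k _ => hq k
  have hZpos : 0 < Z := by
    rw [hZ]
    exact Finset.sum_pos (fun k _ => pow_pos hx0 k) (by simp)
  have hgeom : Z * (1 - x) = 1 - x ^ (d+1) := by
    rw [hZ]
    linear_combination (-1 : ℝ) * geom_sum_mul x (d+1)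
  have hxd : x ^ d < 1 := pow_lt_one₀ hx0.le hx1 (by omega)
  have hxd1 : x ^ (d+1) < 1 := pow_lt_one₀ hx0.le hx1 (by omega)
  have hlamMax : lamMax = (1 - x ^ d) / (1 - x ^ (d+1)) := by
    show (1 - Real.exp (-β * ω * (d : ℝ))) / (1 - Real.exp (-β * ω * ((d : ℝ) + 1))) = _
    rw [show ((d : ℝ) + 1) = (((d+1 : ℕ)) : ℝ) by push_cast; ring, hq d, hq (d+1)]
  have hlamMaxpos : 0 < lamMax := by
    rw [hlamMax]; exact div_pos (by linarith) (by linarith)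
  obtain ⟨hlam0, hlam1⟩ := hlam
  set sv : ℝ := lam / lamMax with hsv
  have hsv0 : 0 ≤ sv := div_nonneg hlam0 hlamMaxpos.le
  have hsv1 : sv ≤ 1 := (div_le_one hlamMaxpos).mpr hlam1
  set cR : ℝ := Real.sqrt (1 - sv) with hcR
  set sR : ℝ := Real.sqrt sv with hsR
  have hc2 : cR ^ 2 = 1 - sv := Real.sq_sqrt (by linarith)
  have hs2 : sR ^ 2 = sv := Real.sq_sqrt hsv0
  have hcs : cR ^ 2 + sR ^ 2 = 1 := by rw [hc2, hs2]; ring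
  refine ⟨Umat d cR sR, Matrix.mem_unitaryGroup_iff.mpr (Umat_mul_star d cR sR hcs), ?_, ?_⟩
  · have hH : Htot = Matrix.diagonal
        (fun i : Fin 2 × Fin (d+1) => (ω : ℂ) * (((i.1 : ℕ) : ℂ) + ((i.2 : ℕ) : ℂ))) :=
      Htot_diag d ω
    rw [hH]
    exact Umat_comm d cR sR ω
  · intro p hp
    have hD : σ p ⊗ₖ γE = Matrix.diagonal (fun i : Fin 2 × Fin (d+1) =>
        (if i.1 = 0 then ((p : ℝ) : ℂ) else ((1 - p : ℝ) : ℂ))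
          * ((Real.exp (-β * ω * ((i.2 : ℕ) : ℝ)) / Z : ℝ) : ℂ)) :=
      kron_diag d _ _ _
    rw [hD, Umat_pop]
    have hone : ¬((1 : Fin 2) = (0 : Fin 2)) := by decide
    simp only [hone, if_true, if_false, ite_true, ite_false, eq_self_iff_true]
    have hterm : ∀ i : Fin d,
        ((cR:ℂ) * cR * ((p:ℂ) * ((Real.exp (-β * ω * (((0, i.succ).2 : Fin (d+1)) : ℕ)) / Z : ℝ) : ℂ))
          + (sR:ℂ) * sR * (((1 - p : ℝ):ℂ) * ((Real.exp (-β * ω * (((1, i.castSucc).2 : Fin (d+1)) : ℕ)) / Z : ℝ) : ℂ)))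
        = (((cR^2 * p / Z) * x ^ ((i:ℕ)+1) + (sR^2 * (1-p) / Z) * x ^ (i:ℕ) : ℝ) : ℂ) := by
      intro i
      have e1 : ((i.succ : Fin (d+1)) : ℕ) = (i:ℕ) + 1 := Fin.val_succ i
      have e2 : ((i.castSucc : Fin (d+1)) : ℕ) = (i:ℕ) := Fin.coe_castSucc i
      simp only [e1, e2, hq]
      push_cast
      ring
    rw [Finset.sum_congr rfl (fun i _ => hterm i)]
    rw [← Complex.ofReal_sum, ← Complex.ofReal_mul, ← Complex.ofReal_add, Complex.ofReal_inj]
    simp only [Fin.val_zero, Nat.cast_zero, mul_zero, Real.exp_zero]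
    rw [Fin.sum_univ_eq_sum_range (fun k => cR^2 * p / Z * x^(k+1) + sR^2 * (1-p) / Z * x^k)]
    rw [Finset.sum_add_distrib, ← Finset.mul_sum, ← Finset.mul_sum]
    have hA : ∑ k ∈ Finset.range d, x^(k+1) = Z - 1 := by
      have h := Finset.sum_range_succ' (fun k => x^k) d
      simp only [pow_zero] at h
      rw [hZ] at *
      linarith
    have hB : ∑ k ∈ Finset.range d, x^k = Z - x^d := by
      have h := Finset.sum_range_succ (fun k => x^k) d
      rw [hZ] at *
      linarith
    rw [hA, hB, hc2, hs2]
    have hlamMax' : lamMax = (Z - x^d)/Z := by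
      rw [hlamMax, div_eq_div_iff (by linarith) (by linarith)]
      linear_combination (-(x^d)) * hgeom
    have hlam' : lam = sv * lamMax := by
      rw [hsv]; field_simp
    rw [hlam', hlamMax']
    have hZne : Z ≠ 0 := ne_of_gt hZpos
    clear_value Z lamMax x sv cR sR
    field_simp
    linear_combination (-(sv*p)) * hgeom
end

section
/- Let β_H, β_C, ω > 0 and let d ≥ 1 be an integer with β_Hω < d·β_Cω. Set λ_H := (1 − e^{−β_Hωd})/(1 − e^{−β_Hω(d+1)}) and λ_C := (1 − e^{−β_Cωd})/(1 − e^{−β_Cω(d+1)}), and assume λ_H·(e^{−β_Hω} − (1−λ_C) − λ_C e^{−(β_H+β_C)ω}) ≠ 0. Then 1 − λ_C·(1 − λ_H e^{−β_Hω} − (1−λ_H)e^{−β_Cω}) / (λ_H·(e^{−β_Hω} − (1−λ_C) − λ_C e^{−(β_H+β_C)ω})) = 1 − ((1 − e^{−dβ_Cω})(1 − e^{−β_Hω})(1 − e^{−(β_C+dβ_H)ω})) / ((1 − e^{−β_Cω})(e^{−β_Hω} − e^{−dβ_Cω})(1 − e^{−dβ_Hω})). -/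
/-- Substituting the finite-bath maximal weights
`λ_H = (1 - e^{-βH ω d})/(1 - e^{-βH ω (d+1)})` and
`λ_C = (1 - e^{-βC ω d})/(1 - e^{-βC ω (d+1)})` into the closed-form maximum
efficiency yields the paper's finite-bath efficiency `η_d`. -/
theorem finite_bath_efficiency_closed_form
    (βH βC ω : ℝ) (d : ℕ) (hd : 1 ≤ d)
    (hβH : 0 < βH) (hβC : 0 < βC) (hω : 0 < ω)
    (hdim : βH * ω < (d : ℝ) * (βC * ω)) :
    let lamH : ℝ :=
      (1 - Real.exp (-βH * ω * (d : ℝ))) / (1 - Real.exp (-βH * ω * ((d : ℝ) + 1)))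
    let lamC : ℝ :=
      (1 - Real.exp (-βC * ω * (d : ℝ))) / (1 - Real.exp (-βC * ω * ((d : ℝ) + 1)))
    lamH * (Real.exp (-βH * ω) - (1 - lamC) - lamC * Real.exp (-(βH + βC) * ω)) ≠ 0 →
    1 - lamC * (1 - lamH * Real.exp (-βH * ω) - (1 - lamH) * Real.exp (-βC * ω)) /
        (lamH * (Real.exp (-βH * ω) - (1 - lamC) - lamC * Real.exp (-(βH + βC) * ω))) =
      1 - ((1 - Real.exp (-(d : ℝ) * βC * ω)) * (1 - Real.exp (-βH * ω)) *
            (1 - Real.exp (-(βC + (d : ℝ) * βH) * ω))) /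
          ((1 - Real.exp (-βC * ω)) * (Real.exp (-βH * ω) - Real.exp (-(d : ℝ) * βC * ω)) *
            (1 - Real.exp (-(d : ℝ) * βH * ω))) := by
  intro lamH lamC hne
  unfold lamH lamC at hne ⊢
  have e1 : Real.exp (-(βH + βC) * ω) = Real.exp (-βH * ω) * Real.exp (-βC * ω) := by
    rw [← Real.exp_add]; ring_nf
  have e2 : Real.exp (-βH * ω * (d : ℝ)) = Real.exp (-βH * ω) ^ d := by
    rw [mul_comm, Real.exp_nat_mul]
  have e3 : Real.exp (-βH * ω * ((d : ℝ) + 1)) = Real.exp (-βH * ω) ^ (d + 1) := by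
    rw [show -βH * ω * ((d : ℝ) + 1) = ((d + 1 : ℕ) : ℝ) * (-βH * ω) by push_cast; ring,
      Real.exp_nat_mul]
  have e4 : Real.exp (-βC * ω * (d : ℝ)) = Real.exp (-βC * ω) ^ d := by
    rw [mul_comm, Real.exp_nat_mul]
  have e5 : Real.exp (-βC * ω * ((d : ℝ) + 1)) = Real.exp (-βC * ω) ^ (d + 1) := by
    rw [show -βC * ω * ((d : ℝ) + 1) = ((d + 1 : ℕ) : ℝ) * (-βC * ω) by push_cast; ring,
      Real.exp_nat_mul]
  have e6 : Real.exp (-(d : ℝ) * βC * ω) = Real.exp (-βC * ω) ^ d := by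
    rw [show -(d : ℝ) * βC * ω = (d : ℝ) * (-βC * ω) by ring, Real.exp_nat_mul]
  have e7 : Real.exp (-(βC + (d : ℝ) * βH) * ω)
      = Real.exp (-βC * ω) * Real.exp (-βH * ω) ^ d := by
    rw [show -(βC + (d : ℝ) * βH) * ω = -βC * ω + (d : ℝ) * (-βH * ω) by ring,
      Real.exp_add, Real.exp_nat_mul]
  have e8 : Real.exp (-(d : ℝ) * βH * ω) = Real.exp (-βH * ω) ^ d := by
    rw [show -(d : ℝ) * βH * ω = (d : ℝ) * (-βH * ω) by ring, Real.exp_nat_mul]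
  rw [e1, e2, e3, e4, e5] at hne
  rw [e1, e2, e3, e4, e5, e6, e7, e8]
  set x := Real.exp (-βH * ω) with hxdef
  set y := Real.exp (-βC * ω) with hydef
  have hx0 : 0 < x := Real.exp_pos _
  have hy0 : 0 < y := Real.exp_pos _
  have hx1 : x < 1 := by
    apply Real.exp_lt_one_iff.mpr; nlinarith
  have hy1 : y < 1 := by
    apply Real.exp_lt_one_iff.mpr; nlinarith
  have hd0 : d ≠ 0 := by omega
  have hxd : x ^ d < 1 := pow_lt_one₀ hx0.le hx1 hd0
  have hyd : y ^ d < 1 := pow_lt_one₀ hy0.le hy1 hd0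
  have hxd1 : x ^ (d + 1) < 1 := pow_lt_one₀ hx0.le hx1 (by omega)
  have hyd1 : y ^ (d + 1) < 1 := pow_lt_one₀ hy0.le hy1 (by omega)
  have hyxd : y ^ d < x := by
    rw [hxdef, hydef, ← Real.exp_nat_mul, Real.exp_lt_exp]
    nlinarith
  have n1 : (1 : ℝ) - y ≠ 0 := by linarith
  have n2 : (1 : ℝ) - x ^ d ≠ 0 := by linarith
  have n3 : (1 : ℝ) - y ^ d ≠ 0 := by linarith
  have n4 : (1 : ℝ) - x ^ (d + 1) ≠ 0 := by linarith
  have n5 : (1 : ℝ) - y ^ (d + 1) ≠ 0 := by linarith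
  have n6 : x - y ^ d ≠ 0 := by linarith
  have hP : ((1:ℝ) - x ^ (d + 1)) * (1 - y ^ (d + 1)) ≠ 0 := mul_ne_zero n4 n5
  have hN : (1 - y ^ d) / (1 - y ^ (d + 1)) *
      (1 - (1 - x ^ d) / (1 - x ^ (d + 1)) * x - (1 - (1 - x ^ d) / (1 - x ^ (d + 1))) * y) =
      ((1 - y ^ d) * (1 - x) * (1 - y * x ^ d)) / (((1:ℝ) - x ^ (d + 1)) * (1 - y ^ (d + 1))) := by
    field_simp
    ring
  have hD : (1 - x ^ d) / (1 - x ^ (d + 1)) *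
      (x - (1 - (1 - y ^ d) / (1 - y ^ (d + 1))) - (1 - y ^ d) / (1 - y ^ (d + 1)) * (x * y)) =
      ((1 - x ^ d) * (x - y ^ d) * (1 - y)) / (((1:ℝ) - x ^ (d + 1)) * (1 - y ^ (d + 1))) := by
    field_simp
    ring
  rw [hN, hD, div_div_div_comm, div_self hP, div_one]
  congr 1
  rw [div_eq_div_iff (by
      exact mul_ne_zero (mul_ne_zero n2 n6) n1)
    (by exact mul_ne_zero (mul_ne_zero n1 n6) n2)]
  ring
end

section
/- Let ω ≥ 0, p ∈ [0,1], σ_p := diag(p, 1−p) and H := diag(0, ω) as 2×2 complex matrices. Then for every U in the unitary group of 2×2 complex matrices, Re Tr(H·(σ_p − U σ_p U†)) ≤ ω·max(0, 1 − 2p), and there exists a unitary U attaining equality (when p ≤ 1/2 the swap matrix X = |0⟩⟨1| + |1⟩⟨0| attains it, and when p ≥ 1/2 the identity attains it). -/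
open Matrix

private lemma qubit_ergo_bound (ω p : ℝ) (hω : 0 ≤ ω) (hp0 : 0 ≤ p) (hp1 : p ≤ 1)
    (U : Matrix (Fin 2) (Fin 2) ℂ) (hU : U ∈ Matrix.unitaryGroup (Fin 2) ℂ) :
    (Matrix.trace (!![0, 0; 0, (ω : ℂ)] *
      (!![((p : ℝ) : ℂ), 0; 0, ((1 - p : ℝ) : ℂ)] -
        U * !![((p : ℝ) : ℂ), 0; 0, ((1 - p : ℝ) : ℂ)] * Uᴴ))).re ≤ ω * max 0 (1 - 2 * p) := by
  have h1 : (U * Uᴴ) 1 1 = 1 := by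
    rw [show Uᴴ = star U from rfl, (Matrix.mem_unitaryGroup_iff).mp hU]; simp
  simp only [Matrix.mul_apply, Fin.sum_univ_two, Matrix.conjTranspose_apply] at h1
  have h1' := congrArg Complex.re h1
  simp only [Complex.add_re, Complex.mul_re, Complex.star_def, Complex.conj_re, Complex.conj_im,
    Complex.one_re] at h1'
  simp only [Matrix.trace, Matrix.mul_apply, Fin.sum_univ_two, Matrix.conjTranspose_apply,
    Matrix.sub_apply, Matrix.diag_apply, Matrix.of_apply, Matrix.cons_val', Matrix.cons_val_zero,
    Matrix.cons_val_one, Matrix.head_cons, Matrix.empty_val', Matrix.cons_val_fin_one,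
    Matrix.head_fin_const, zero_mul, mul_zero, add_zero, zero_add]
  simp only [Complex.add_re, Complex.mul_re, Complex.sub_re, Complex.sub_im, Complex.mul_im,
    Complex.ofReal_re, Complex.ofReal_im, Complex.star_def, Complex.conj_re, Complex.conj_im,
    Complex.add_im, zero_mul, mul_zero, sub_zero, zero_sub, neg_zero, add_zero, zero_add]
  set a := (U 1 0).re
  set b := (U 1 0).im
  set c := (U 1 1).re
  set d := (U 1 1).im
  have hs : (0:ℝ) ≤ c*c + d*d := add_nonneg (mul_self_nonneg c) (mul_self_nonneg d)
  have ht : (0:ℝ) ≤ a*a + b*b := add_nonneg (mul_self_nonneg a) (mul_self_nonneg b)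
  have hsum : a*a + b*b + (c*c + d*d) = 1 := by linarith [h1']
  have heq : ω * (1 - p - (a * p * a - b * p * -b + (c * (1 - p) * c - d * (1 - p) * -d)))
      = ω * (1 - 2*p) * (a*a + b*b) := by linear_combination (-(ω * (1 - p))) * hsum
  rw [heq]
  rcases le_or_gt p (1/2) with h | h
  · rw [max_eq_right (by linarith)]
    have hA1 : a*a + b*b ≤ 1 := by linarith
    exact mul_le_of_le_one_right (by nlinarith) hA1
  · rw [max_eq_left (by linarith)]
    nlinarith [mul_nonneg hω ht]

/-- Ergotropy of a diagonal qubit state: for `σ_p = diag(p, 1-p)` and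
`H = diag(0, ω)`, the extractable work `Re Tr(H (σ_p - U σ_p Uᴴ))` over
unitaries `U` is at most `ω max(0, 1 - 2p)`; the bound is attained, by the
swap when `p ≤ 1/2` and by the identity when `p ≥ 1/2`. -/
theorem qubit_ergotropy
    (ω p : ℝ) (hω : 0 ≤ ω) (hp : p ∈ Set.Icc (0:ℝ) 1) :
    let H : Matrix (Fin 2) (Fin 2) ℂ := !![0, 0; 0, (ω : ℂ)]
    let σp : Matrix (Fin 2) (Fin 2) ℂ := !![((p : ℝ) : ℂ), 0; 0, ((1 - p : ℝ) : ℂ)]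
    let X : Matrix (Fin 2) (Fin 2) ℂ := !![0, 1; 1, 0]
    (∀ U : Matrix (Fin 2) (Fin 2) ℂ, U ∈ Matrix.unitaryGroup (Fin 2) ℂ →
        (Matrix.trace (H * (σp - U * σp * Uᴴ))).re ≤ ω * max 0 (1 - 2 * p)) ∧
    (∃ U ∈ Matrix.unitaryGroup (Fin 2) ℂ,
        (Matrix.trace (H * (σp - U * σp * Uᴴ))).re = ω * max 0 (1 - 2 * p)) ∧
    (p ≤ 1 / 2 →
        X ∈ Matrix.unitaryGroup (Fin 2) ℂ ∧
        (Matrix.trace (H * (σp - X * σp * Xᴴ))).re = ω * max 0 (1 - 2 * p)) ∧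
    (1 / 2 ≤ p →
        (Matrix.trace (H * (σp - (1 : Matrix (Fin 2) (Fin 2) ℂ) * σp *
          (1 : Matrix (Fin 2) (Fin 2) ℂ)ᴴ))).re = ω * max 0 (1 - 2 * p)) := by
  intro H σp X
  obtain ⟨hp0, hp1⟩ := hp
  have hXmem : X ∈ Matrix.unitaryGroup (Fin 2) ℂ := by
    rw [Matrix.mem_unitaryGroup_iff]
    ext i j
    fin_cases i <;> fin_cases j <;>
      simp [X, Matrix.mul_apply, Fin.sum_univ_two, Matrix.one_apply]
  have hid : (Matrix.trace (H * (σp - (1 : Matrix (Fin 2) (Fin 2) ℂ) * σp *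
      (1 : Matrix (Fin 2) (Fin 2) ℂ)ᴴ))).re = 0 := by
    simp
  have hX : (Matrix.trace (H * (σp - X * σp * Xᴴ))).re = ω * (1 - 2 * p) := by
    simp only [H, σp, X, Matrix.trace, Matrix.mul_apply, Fin.sum_univ_two,
      Matrix.conjTranspose_apply, Matrix.sub_apply, Matrix.diag_apply, Matrix.of_apply,
      Matrix.cons_val', Matrix.cons_val_zero, Matrix.cons_val_one, Matrix.head_cons,
      Matrix.empty_val', Matrix.cons_val_fin_one, Matrix.head_fin_const, zero_mul, mul_zero,
      add_zero, zero_add, one_mul, mul_one, star_zero, star_one]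
    simp only [Complex.add_re, Complex.mul_re, Complex.sub_re, Complex.sub_im, Complex.mul_im,
      Complex.ofReal_re, Complex.ofReal_im, Complex.zero_re, Complex.zero_im]
    ring
  refine ⟨fun U hU => qubit_ergo_bound ω p hω hp0 hp1 U hU, ?_, ?_, ?_⟩
  · rcases le_or_gt p (1/2) with h | h
    · exact ⟨X, hXmem, by rw [hX, max_eq_right (by linarith)]⟩
    · exact ⟨1, one_mem _, by rw [hid, max_eq_left (by linarith)]; ring⟩
  · intro h
    exact ⟨hXmem, by rw [hX, max_eq_right (by linarith)]⟩
  · intro h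
    rw [hid, max_eq_left (by linarith)]; ring
end
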